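/- Let q^z ∈ [0,1]^{m×K} be a row-stochastic matrix (each row sums to 1) and suppose the family I(q^z) of hard assignments z such that q^z_{i,z(i)} > 0 for all i satisfies: every z ∈ I(q^z) has zero misclustering rate relative to the truth z*, where all true classes are nonempty. If additionally the misclustering rate of q^z itself is positive (q^z is not equal, up to permutation, to the true membership matrix), then a contradiction arises; equivalently, if M_row(q^z) > 0 then there exists a hard assignment z̃ with q^z_{i,z̃(i)} > 0 for all i and M_row(1^{z̃}) > 0. -/

import Mathlib

noncomputable def MrowSoft {m K : ℕ} (zstar : Fin m → Fin K)
    (q : Fin m → Fin K → ℝ) : ℝ :=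
  Finset.univ.inf' ⟨Equiv.refl (Fin K), Finset.mem_univ _⟩
    (fun s : Equiv.Perm (Fin K) =>
      1 - ∑ k', (1 / (m : ℝ)) * ∑ i, (if zstar i = s k' then (1 : ℝ) else 0) * q i k')

lemma mrow_obj_eq {m K : ℕ} (zstar : Fin m → Fin K) (q : Fin m → Fin K → ℝ)
    (s : Equiv.Perm (Fin K)) :
    ∑ k', (1 / (m : ℝ)) * ∑ i, (if zstar i = s k' then (1 : ℝ) else 0) * q i k'
      = (∑ i, q i (s.symm (zstar i))) / m := by
  rw [← Finset.mul_sum, Finset.sum_comm, one_div, inv_mul_eq_div]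
  congr 1
  refine Finset.sum_congr rfl fun i _ => ?_
  rw [Finset.sum_eq_single (s.symm (zstar i))]
  · simp
  · intro b _ hb
    rw [if_neg, zero_mul]
    intro h
    exact hb (by rw [h, Equiv.symm_apply_apply])
  · simp

lemma mrow_pos_iff {m K : ℕ} (hm : 0 < m) (zstar : Fin m → Fin K)
    (q : Fin m → Fin K → ℝ) :
    0 < MrowSoft zstar q ↔
      ∀ s : Equiv.Perm (Fin K), ∑ i, q i (s.symm (zstar i)) < m := by
  have hm' : (0 : ℝ) < m := by exact_mod_cast hm
  unfold MrowSoft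
  refine (Iff.trans (Finset.lt_inf'_iff ..) ?_)
  constructor
  · intro h s
    have h1 := h s (Finset.mem_univ s)
    rw [mrow_obj_eq, sub_pos, div_lt_one hm'] at h1
    exact h1
  · intro h s _
    rw [mrow_obj_eq, sub_pos, div_lt_one hm']
    exact h s

theorem exists_hard_with_positive_misclustering (m K : ℕ) (hm : 0 < m)
    (zstar : Fin m → Fin K) (hne : ∀ k, ∃ i, zstar i = k)
    (q : Fin m → Fin K → ℝ) (hq0 : ∀ i k, 0 ≤ q i k) (hq1 : ∀ i, ∑ k, q i k = 1)
    (hpos : 0 < MrowSoft zstar q) :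
    ∃ zt : Fin m → Fin K, (∀ i, 0 < q i (zt i)) ∧
      0 < MrowSoft zstar (fun i k => if zt i = k then 1 else 0) := by
  by_contra hcon
  push_neg at hcon
  -- every row has a positive entry
  have hrow : ∀ i, ∃ k, 0 < q i k := by
    intro i
    by_contra h
    push_neg at h
    have h0 : ∑ k, q i k = 0 :=
      Finset.sum_eq_zero fun k _ => le_antisymm (h k) (hq0 i k)
    rw [hq1 i] at h0
    norm_num at h0
  -- every hard assignment in the support matches the truth up to a permutation
  have key : ∀ zt : Fin m → Fin K, (∀ i, 0 < q i (zt i)) →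
      ∃ s : Equiv.Perm (Fin K), ∀ i, zt i = s.symm (zstar i) := by
    intro zt hzt
    have h1 : ¬ 0 < MrowSoft zstar (fun i k => if zt i = k then (1 : ℝ) else 0) :=
      not_lt.mpr (hcon zt hzt)
    rw [mrow_pos_iff hm] at h1
    push_neg at h1
    obtain ⟨s, hs⟩ := h1
    refine ⟨s, fun i => ?_⟩
    by_contra hnei
    have hlt : (∑ i, if zt i = s.symm (zstar i) then (1 : ℝ) else 0)
        < ∑ _i : Fin m, (1 : ℝ) := by
      apply Finset.sum_lt_sum
      · intro j _
        split <;> norm_num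
      · exact ⟨i, Finset.mem_univ i, by rw [if_neg hnei]; norm_num⟩
    simp only [Finset.sum_const, Finset.card_univ, Fintype.card_fin,
      nsmul_eq_mul, mul_one] at hlt
    have := hs.trans_lt hlt
    exact lt_irrefl _ this
  -- choose a base hard assignment in the support
  classical
  set zt0 : Fin m → Fin K := fun j => Classical.choose (hrow j) with hzt0def
  have hzt0 : ∀ j, 0 < q j (zt0 j) := fun j => Classical.choose_spec (hrow j)
  -- the support of every row is a singleton
  have hsingle : ∀ i k, 0 < q i k → k = zt0 i := by
    intro i k hk
    obtain ⟨s0, hs0⟩ := key zt0 hzt0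
    set zt1 : Fin m → Fin K := Function.update zt0 i k with hzt1def
    have hzt1 : ∀ j, 0 < q j (zt1 j) := by
      intro j
      by_cases hj : j = i
      · subst hj
        simpa [hzt1def, Function.update_self] using hk
      · simpa [hzt1def, Function.update_of_ne hj] using hzt0 j
    obtain ⟨s1, hs1⟩ := key zt1 hzt1
    -- s0.symm and s1.symm agree off zstar i
    have hagree : ∀ c, c ≠ zstar i → s1.symm c = s0.symm c := by
      intro c hc
      obtain ⟨j, hj⟩ := hne c
      have hji : j ≠ i := by
        intro h; apply hc; rw [← hj, h]
      have e0 : zt0 j = s0.symm (zstar j) := hs0 j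
      have e1 : zt1 j = s1.symm (zstar j) := hs1 j
      rw [hzt1def, Function.update_of_ne hji] at e1
      rw [hj] at e0 e1
      rw [← e0, ← e1]
    have hk1 : k = s1.symm (zstar i) := by
      have := hs1 i
      rwa [hzt1def, Function.update_self] at this
    have hk0 : zt0 i = s0.symm (zstar i) := hs0 i
    rw [hk1, hk0]
    by_contra hne2
    have hs0a : s0 (s1.symm (zstar i)) ≠ zstar i := by
      intro h
      exact hne2 ((Equiv.eq_symm_apply s0).mpr h)
    have := hagree (s0 (s1.symm (zstar i))) hs0a
    rw [Equiv.symm_apply_apply] at this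
    have h2 : s0 (s1.symm (zstar i)) = zstar i := by
      have := s1.symm.injective this
      exact this
    exact hs0a h2
  -- hence each row puts full mass on zt0
  have hone : ∀ i, q i (zt0 i) = 1 := by
    intro i
    have : ∑ k, q i k = q i (zt0 i) := by
      rw [Finset.sum_eq_single (zt0 i)]
      · intro b _ hb
        by_contra hb0
        have : 0 < q i b := lt_of_le_of_ne (hq0 i b) (Ne.symm hb0)
        exact hb (hsingle i b this)
      · simp
    rw [← this, hq1 i]
  -- contradiction with positivity of MrowSoft for q
  obtain ⟨s0, hs0⟩ := key zt0 hzt0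
  rw [mrow_pos_iff hm] at hpos
  have hlt := hpos s0
  have heq : ∑ i, q i (s0.symm (zstar i)) = (m : ℝ) := by
    have : ∀ i : Fin m, q i (s0.symm (zstar i)) = 1 := by
      intro i
      rw [← hs0 i]
      exact hone i
    rw [Finset.sum_congr rfl fun i _ => this i]
    simp
  rw [heq] at hlt
  exact lt_irrefl _ hlt
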